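/- For every x > 0, e^x · ∫_x^∞ e^{-s}/s ds ≤ log(1 + 1/x). -/

import Mathlib

open Real MeasureTheory Set Filter

lemma aux_meas : Measurable (fun s : ℝ => Real.exp (-s) / s) :=
  (Real.measurable_exp.comp measurable_neg).div measurable_id

lemma aux_exp_int (a : ℝ) : IntegrableOn (fun s => Real.exp (-s)) (Set.Ioi a) := by
  have := exp_neg_integrableOn_Ioi a (by norm_num : (0:ℝ) < 1)
  simpa [neg_one_mul] using this

lemma aux_int {a : ℝ} (ha : 0 < a) :
    IntegrableOn (fun s => Real.exp (-s) / s) (Set.Ioi a) := by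
  have hg : IntegrableOn (fun s => Real.exp (-s) * a⁻¹) (Set.Ioi a) :=
    (aux_exp_int a).mul_const a⁻¹
  refine hg.mono' (aux_meas.aestronglyMeasurable.restrict) ?_
  filter_upwards [ae_restrict_mem measurableSet_Ioi] with s hs
  have hs' : 0 < s := ha.trans hs
  rw [Real.norm_eq_abs, abs_of_nonneg (by positivity)]
  rw [div_eq_mul_inv]
  exact mul_le_mul_of_nonneg_left (inv_anti₀ ha hs.le) (Real.exp_pos _).le

-- upper bound: E1 x ≤ exp(-x)/x
lemma aux_upper {x : ℝ} (hx : 0 < x) :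
    ∫ s in Set.Ioi x, Real.exp (-s) / s ≤ Real.exp (-x) / x := by
  have h1 : ∫ s in Set.Ioi x, Real.exp (-s) / s ≤ ∫ s in Set.Ioi x, Real.exp (-s) * x⁻¹ := by
    refine setIntegral_mono_on (aux_int hx) ((aux_exp_int x).mul_const x⁻¹) measurableSet_Ioi ?_
    intro s hs
    rw [div_eq_mul_inv]
    exact mul_le_mul_of_nonneg_left (inv_anti₀ hx hs.le) (Real.exp_pos _).le
  calc _ ≤ _ := h1
    _ = Real.exp (-x) / x := by
        rw [MeasureTheory.integral_mul_const, integral_exp_neg_Ioi, div_eq_mul_inv]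

-- lower bound: exp(-x)/(x+1) ≤ E1 x
lemma aux_lower {x : ℝ} (hx : 0 < x) :
    Real.exp (-x) / (x + 1) ≤ ∫ s in Set.Ioi x, Real.exp (-s) / s := by
  set g : ℝ → ℝ := fun s => -Real.exp (-s) / (s + 1) with hg
  set g' : ℝ → ℝ := fun s => Real.exp (-s) * (s + 2) / (s + 1) ^ 2 with hg'
  have hderiv : ∀ s ∈ Set.Ici x, HasDerivAt g (g' s) s := by
    intro s hs
    have hs1 : s + 1 ≠ 0 := by have := hx.trans_le hs; positivity
    have h1 : HasDerivAt (fun t : ℝ => -Real.exp (-t)) (Real.exp (-s)) s := by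
      exact (((Real.hasDerivAt_exp (-s)).comp s (hasDerivAt_neg s))).neg.congr_deriv (by simp)
    have h2 : HasDerivAt (fun t : ℝ => t + 1) 1 s := by
      simpa using (hasDerivAt_id s).add_const 1
    have := h1.div h2 hs1
    refine this.congr_deriv ?_
    simp only [hg']
    ring
  have hpos : ∀ s ∈ Set.Ioi x, 0 ≤ g' s := by
    intro s hs
    have : 0 < s := hx.trans hs
    rw [hg']
    positivity
  have htend : Tendsto g atTop (nhds 0) := by
    rw [hg]
    have h1 : Tendsto (fun s : ℝ => Real.exp (-s)) atTop (nhds 0) := by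
      simpa using Real.tendsto_exp_neg_atTop_nhds_zero
    have h2 : Tendsto (fun s : ℝ => (s + 1)⁻¹) atTop (nhds 0) := by
      apply Tendsto.inv_tendsto_atTop
      exact tendsto_atTop_add_const_right _ 1 tendsto_id
    simpa [div_eq_mul_inv] using (h1.neg.mul h2).congr (fun s => by ring)
  have key : ∫ s in Set.Ioi x, g' s = 0 - g x :=
    integral_Ioi_of_hasDerivAt_of_nonneg' hderiv hpos htend
  have hgx : 0 - g x = Real.exp (-x) / (x + 1) := by
    rw [hg]; ring
  rw [← hgx, ← key]
  refine setIntegral_mono_on (integrableOn_Ioi_deriv_of_nonneg' hderiv hpos htend)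
    (aux_int hx) measurableSet_Ioi ?_
  intro s hs
  have hs0 : 0 < s := hx.trans hs
  rw [hg']
  beta_reduce
  rw [div_le_div_iff₀ (by positivity) hs0]
  have : s * (s + 2) ≤ (s + 1) ^ 2 := by nlinarith
  calc Real.exp (-s) * (s + 2) * s = Real.exp (-s) * (s * (s + 2)) := by ring
    _ ≤ Real.exp (-s) * (s + 1) ^ 2 := by
        exact mul_le_mul_of_nonneg_left this (Real.exp_pos _).le
    _ = Real.exp (-s) * (s + 1) ^ 2 := rfl

-- derivative of E1
lemma aux_E1_deriv {x : ℝ} (hx : 0 < x) :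
    HasDerivAt (fun y => ∫ s in Set.Ioi y, Real.exp (-s) / s) (-(Real.exp (-x) / x)) x := by
  set a := x / 2 with ha
  have ha0 : 0 < a := by positivity
  have hax : a < x := by rw [ha]; linarith
  have hsplit : ∀ y ∈ Set.Ioi a,
      (∫ s in Set.Ioi y, Real.exp (-s) / s)
        = (∫ s in Set.Ioi a, Real.exp (-s) / s) - ∫ s in a..y, Real.exp (-s) / s := by
    intro y hy
    have hy' : a ≤ y := le_of_lt hy
    rw [intervalIntegral.integral_of_le hy', eq_sub_iff_add_eq, add_comm,
      ← MeasureTheory.setIntegral_union (Set.Ioc_disjoint_Ioi le_rfl) measurableSet_Ioi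
        ((aux_int ha0).mono_set Set.Ioc_subset_Ioi_self)
        ((aux_int ha0).mono_set (Set.Ioi_subset_Ioi hy')),
      Set.Ioc_union_Ioi_eq_Ioi hy']
  have hFTC : HasDerivAt (fun y => ∫ s in a..y, Real.exp (-s) / s) (Real.exp (-x) / x) x := by
    apply intervalIntegral.integral_hasDerivAt_right
    · rw [intervalIntegrable_iff_integrableOn_Ioc_of_le hax.le]
      exact (aux_int ha0).mono_set Set.Ioc_subset_Ioi_self
    · exact aux_meas.aestronglyMeasurable.stronglyMeasurableAtFilter
    · exact ((Real.continuous_exp.comp continuous_neg).continuousAt).div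
        continuousAt_id (ne_of_gt hx)
  have h2 : HasDerivAt (fun y => (∫ s in Set.Ioi a, Real.exp (-s) / s)
      - ∫ s in a..y, Real.exp (-s) / s) (-(Real.exp (-x) / x)) x := by
    exact ((hasDerivAt_const x (∫ s in Set.Ioi a, Real.exp (-s) / s)).sub hFTC).congr_deriv (by simp)
  refine h2.congr_of_eventuallyEq ?_
  filter_upwards [isOpen_Ioi.mem_nhds (show x ∈ Set.Ioi a from hax)] with y hy
  exact hsplit y hy

-- the function G
noncomputable def auxG : ℝ → ℝ :=
  fun y => Real.log (1 + 1 / y) - Real.exp y * ∫ s in Set.Ioi y, Real.exp (-s) / s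

lemma auxG_deriv {x : ℝ} (hx : 0 < x) :
    HasDerivAt auxG (1 / (x + 1) - Real.exp x * ∫ s in Set.Ioi x, Real.exp (-s) / s) x := by
  have hx1 : (0:ℝ) < x + 1 := by linarith
  have hne : 1 + 1 / x ≠ 0 := by positivity
  have hlog : HasDerivAt (fun y => Real.log (1 + 1 / y)) (-(1 / (x * (x + 1)))) x := by
    have hinner : HasDerivAt (fun y : ℝ => 1 + 1 / y) (-(x ^ 2)⁻¹) x := by
      simpa [one_div] using (hasDerivAt_inv hx.ne').const_add 1
    have := (Real.hasDerivAt_log hne).comp x hinner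
    refine this.congr_deriv ?_
    field_simp
  have hprod : HasDerivAt (fun y => Real.exp y * ∫ s in Set.Ioi y, Real.exp (-s) / s)
      ((Real.exp x * ∫ s in Set.Ioi x, Real.exp (-s) / s) - 1 / x) x := by
    have := (Real.hasDerivAt_exp x).mul (aux_E1_deriv hx)
    refine this.congr_deriv ?_
    rw [Real.exp_neg]
    field_simp
    ring
  have := hlog.sub hprod
  refine this.congr_deriv ?_
  have h1 : -(1 / (x * (x + 1))) + 1 / x = 1 / (x + 1) := by
    field_simp
    ring
  linarith

lemma auxG_anti : AntitoneOn auxG (Set.Ioi 0) := by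
  have hderiv : ∀ y ∈ Set.Ioi (0:ℝ), HasDerivAt auxG
      (1 / (y + 1) - Real.exp y * ∫ s in Set.Ioi y, Real.exp (-s) / s) y :=
    fun y hy => auxG_deriv hy
  apply antitoneOn_of_deriv_nonpos (convex_Ioi 0)
  · exact fun y hy => (hderiv y hy).continuousAt.continuousWithinAt
  · intro y hy
    rw [interior_Ioi] at hy
    exact (hderiv y hy).differentiableAt.differentiableWithinAt
  · intro y hy
    rw [interior_Ioi] at hy
    rw [(hderiv y hy).deriv]
    have hy0 : (0:ℝ) < y := hy
    have hlow : Real.exp (-y) / (y + 1) ≤ ∫ s in Set.Ioi y, Real.exp (-s) / s := aux_lower hy0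
    have := mul_le_mul_of_nonneg_left hlow (Real.exp_pos y).le
    have heq : Real.exp y * (Real.exp (-y) / (y + 1)) = 1 / (y + 1) := by
      rw [Real.exp_neg]; field_simp
    linarith [heq ▸ this]

lemma auxG_tendsto : Tendsto auxG atTop (nhds 0) := by
  have hlog : Tendsto (fun y : ℝ => Real.log (1 + 1 / y)) atTop (nhds 0) := by
    have h1 : Tendsto (fun y : ℝ => 1 + 1 / y) atTop (nhds 1) := by
      have : Tendsto (fun y : ℝ => 1 / y) atTop (nhds 0) := by
        simpa [one_div] using tendsto_inv_atTop_zero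
      simpa using tendsto_const_nhds.add this
    have := (Real.continuousAt_log one_ne_zero).tendsto.comp h1
    simpa [Function.comp_def] using this
  have hprod : Tendsto (fun y : ℝ => Real.exp y * ∫ s in Set.Ioi y, Real.exp (-s) / s)
      atTop (nhds 0) := by
    apply squeeze_zero' (g := fun y : ℝ => 1 / y)
    · filter_upwards [eventually_gt_atTop (0:ℝ)] with y hy
      exact mul_nonneg (Real.exp_pos y).le (setIntegral_nonneg measurableSet_Ioi
        (fun s hs => by have : 0 < s := hy.trans hs; positivity))
    · filter_upwards [eventually_gt_atTop (0:ℝ)] with y hy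
      have := mul_le_mul_of_nonneg_left (aux_upper hy) (Real.exp_pos y).le
      have heq : Real.exp y * (Real.exp (-y) / y) = 1 / y := by
        rw [Real.exp_neg]; field_simp
      linarith [heq ▸ this]
    · simpa [one_div] using tendsto_inv_atTop_zero
  unfold auxG
  simpa using hlog.sub hprod

theorem stmt_2 (x : ℝ) (hx : 0 < x) :
    Real.exp x * ∫ s in Set.Ioi x, Real.exp (-s) / s ≤ Real.log (1 + 1 / x) := by
  have h0 : 0 ≤ auxG x := by
    apply le_of_tendsto auxG_tendsto
    filter_upwards [eventually_ge_atTop x] with y hy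
    exact auxG_anti hx (hx.trans_le hy) hy
  have : auxG x = Real.log (1 + 1 / x)
      - Real.exp x * ∫ s in Set.Ioi x, Real.exp (-s) / s := rfl
  linarith
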